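/- Suppose {(p_j,q_j) : j=1,...,n} spans a Lagrangian subspace, the matrix with rows (q_j, p_j) is in reduced row echelon form, the matrix with rows q_1,...,q_n has rank r ≥ 1, and k is the position of the leading one in row (q_1,p_1), with k ≤ n (so the leading one lies in q_1). Then (e_k, 0), with e_k the k-th standard basis vector, satisfies [(e_k,0),(p_j,q_j)] = 0 for j = 2,...,n but [(e_k,0),(p_1,q_1)] = 1; hence {(e_k,0),(p_2,q_2),...,(p_n,q_n)} spans a Lagrangian subspace, and the matrix with rows 0,q_2,...,q_n has rank r - 1. -/

import Mathlib

open scoped Matrix ComplexConjugate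

/-- Bit vectors of length `n` over `ℤ/2`. -/
abbrev V2 (n : ℕ) := Fin n → ZMod 2

/-- Dot product over `ℤ/2`. -/
def dotZ2 {n : ℕ} (a b : V2 n) : ZMod 2 := ∑ i, a i * b i

/-- The symplectic product on `(ℤ/2)^{2n}`: `[(p₁,q₁),(p₂,q₂)] = p₁·q₂ - p₂·q₁`. -/
def symp {n : ℕ} (x y : V2 n × V2 n) : ZMod 2 := dotZ2 x.1 y.2 - dotZ2 y.1 x.2

/-- The computational basis vector `|z⟩` in `ℂ^{2^n}`. -/
noncomputable def basisVec {n : ℕ} (z : V2 n) : V2 n → ℂ := fun y => if y = z then 1 else 0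

/-- The Pauli operator `W(p,q) = (-i)^{p·q mod 4} Z^p X^q`, where
`Z^p X^q |z⟩ = (-1)^{(z+q)·p} |z+q⟩` (bits of `p·q` lifted to integers). -/
noncomputable def W {n : ℕ} (p q : V2 n) : Matrix (V2 n) (V2 n) ℂ :=
  Matrix.of fun y z =>
    if y = z + q then
      (-Complex.I) ^ ((∑ i, (p i).val * (q i).val) % 4) * (-1 : ℂ) ^ (dotZ2 (z + q) p).val
    else 0
/-- A subspace of `(ℤ/2)^{2n}` is isotropic if the symplectic form vanishes on it. -/
def IsIsotropic {n : ℕ} (L : Submodule (ZMod 2) (V2 n × V2 n)) : Prop :=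
  ∀ x ∈ L, ∀ y ∈ L, symp x y = 0

/-- A Lagrangian subspace: a maximal isotropic subspace of `(ℤ/2)^{2n}`. -/
def IsLagrangian {n : ℕ} (L : Submodule (ZMod 2) (V2 n × V2 n)) : Prop :=
  IsIsotropic L ∧ ∀ L', IsIsotropic L' → L ≤ L' → L' = L

/-- If the check matrix is in reduced row echelon form with the leading one of the first
row in position `k` of the `q`-part (so `q₁ k = 1` and `qⱼ k = 0` for `j ≠ 1`), and the
`q`-matrix has rank `r ≥ 1`, then `(e_k, 0)` has vanishing symplectic product with
`(pⱼ, qⱼ)` for `j ≠ 1` and product `1` with `(p₁, q₁)`; hence replacing `(p₁, q₁)` by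
`(e_k, 0)` yields a Lagrangian subspace whose `q`-matrix has rank `r - 1`. -/
lemma symp_comm {n : ℕ} (x y : V2 n × V2 n) : symp x y = symp y x := by
  unfold symp
  exact (by decide : ∀ a b : ZMod 2, a - b = b - a) _ _

lemma symp_self {n : ℕ} (x : V2 n × V2 n) : symp x x = 0 := sub_self _

def sympR {n : ℕ} (x : V2 n × V2 n) : (V2 n × V2 n) →ₗ[ZMod 2] ZMod 2 where
  toFun y := symp x y
  map_add' y z := by
    have h1 : dotZ2 x.1 (y.2 + z.2) = dotZ2 x.1 y.2 + dotZ2 x.1 z.2 := by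
      simp [dotZ2, mul_add, Finset.sum_add_distrib]
    have h2 : dotZ2 (y.1 + z.1) x.2 = dotZ2 y.1 x.2 + dotZ2 z.1 x.2 := by
      simp [dotZ2, add_mul, Finset.sum_add_distrib]
    simp only [symp, Prod.fst_add, Prod.snd_add] at *
    rw [h1, h2]; ring
  map_smul' c y := by
    simp only [symp, Prod.smul_fst, Prod.smul_snd, RingHom.id_apply, smul_eq_mul, dotZ2,
      Pi.smul_apply, smul_eq_mul]
    rw [mul_sub, Finset.mul_sum, Finset.mul_sum]
    congr 1 <;> exact Finset.sum_congr rfl fun i _ => by ring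

lemma symp_add_right {n : ℕ} (x y z : V2 n × V2 n) :
    symp x (y + z) = symp x y + symp x z := (sympR x).map_add y z

lemma symp_smul_right {n : ℕ} (x : V2 n × V2 n) (c : ZMod 2) (y : V2 n × V2 n) :
    symp x (c • y) = c * symp x y := (sympR x).map_smul c y

lemma symp_zero_right {n : ℕ} (x : V2 n × V2 n) : symp x 0 = 0 := (sympR x).map_zero

lemma symp_sum_right {n : ℕ} (x : V2 n × V2 n) (g : Fin n → V2 n × V2 n) :
    symp x (∑ j, g j) = ∑ j, symp x (g j) := map_sum (sympR x) g Finset.univ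

lemma isotropic_span {n : ℕ} (S : Set (V2 n × V2 n))
    (hS : ∀ x ∈ S, ∀ y ∈ S, symp x y = 0) :
    IsIsotropic (Submodule.span (ZMod 2) S) := by
  have key : ∀ x ∈ Submodule.span (ZMod 2) S, ∀ b ∈ S, symp x b = 0 := by
    intro x hx
    induction hx using Submodule.span_induction with
    | mem a ha => exact hS a ha
    | zero => intro b _; rw [symp_comm]; exact symp_zero_right b
    | add u v hu hv h1 h2 =>
        intro b hb
        rw [symp_comm, symp_add_right, symp_comm b u, symp_comm b v, h1 b hb, h2 b hb, add_zero]
    | smul c u hu h1 =>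
        intro b hb
        rw [symp_comm, symp_smul_right, symp_comm b u, h1 b hb, mul_zero]
  intro x hx y hy
  induction hy using Submodule.span_induction with
  | mem b hb => exact key x hx b hb
  | zero => exact symp_zero_right x
  | add u v hu hv h1 h2 => rw [symp_add_right, h1, h2, add_zero]
  | smul c u hu h1 => rw [symp_smul_right, h1, mul_zero]

lemma symp_e {n : ℕ} (k : Fin n) (pj qj : V2 n) :
    symp ((fun i => if i = k then 1 else 0 : V2 n), (0 : V2 n)) (pj, qj) = qj k := by
  simp [symp, dotZ2, ite_mul, Finset.sum_ite_eq']

theorem splitting_replacement {n : ℕ} (hn : 0 < n) (p q : Fin n → V2 n)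
    (hLag : IsLagrangian (Submodule.span (ZMod 2) (Set.range fun j => (p j, q j))))
    (k : Fin n) (r : ℕ) (hr : 1 ≤ r)
    (hrank : (Matrix.of fun j i => q j i).rank = r)
    (hlead : q ⟨0, hn⟩ k = 1) (hcol : ∀ j, j ≠ ⟨0, hn⟩ → q j k = 0) :
    (∀ j, j ≠ ⟨0, hn⟩ →
      symp ((fun i => if i = k then 1 else 0 : V2 n), (0 : V2 n)) (p j, q j) = 0) ∧
    symp ((fun i => if i = k then 1 else 0 : V2 n), (0 : V2 n)) (p ⟨0, hn⟩, q ⟨0, hn⟩) = 1 ∧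
    IsLagrangian (Submodule.span (ZMod 2)
      (insert ((fun i => if i = k then 1 else 0 : V2 n), (0 : V2 n))
        {x | ∃ j, j ≠ ⟨0, hn⟩ ∧ x = (p j, q j)})) ∧
    (Matrix.of fun j i => if j = ⟨0, hn⟩ then (0 : ZMod 2) else q j i).rank = r - 1 := by
  classical
  have haa : ∀ a : ZMod 2, a + a = 0 := by decide
  refine ⟨fun j hj => by rw [symp_e]; exact hcol j hj,
    by rw [symp_e]; exact hlead, ?_, ?_⟩
  · -- Lagrangian
    set e : V2 n × V2 n := ((fun i => if i = k then 1 else 0 : V2 n), (0 : V2 n)) with he_def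
    set S : Set (V2 n × V2 n) := {x | ∃ j, j ≠ ⟨0, hn⟩ ∧ x = (p j, q j)} with hS_def
    have he' : ∀ pj qj : V2 n, symp e (pj, qj) = qj k := fun pj qj => symp_e k pj qj
    constructor
    · -- isotropy
      apply isotropic_span
      intro x hx y hy
      simp only [Set.mem_insert_iff, hS_def, Set.mem_setOf_eq] at hx hy
      rcases hx with rfl | ⟨i, hi, rfl⟩ <;> rcases hy with rfl | ⟨j, hj, rfl⟩
      · exact symp_self _
      · rw [he', hcol j hj]
      · rw [symp_comm, he', hcol i hi]
      · exact hLag.1 _ (Submodule.subset_span ⟨i, rfl⟩) _ (Submodule.subset_span ⟨j, rfl⟩)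
    · -- maximality
      intro L' hL' hle
      refine le_antisymm (fun x hx => ?_) hle
      have heL' : e ∈ L' := hle (Submodule.subset_span (Set.mem_insert _ _))
      have hfL' : ∀ j, j ≠ ⟨0, hn⟩ → (p j, q j) ∈ L' := fun j hj =>
        hle (Submodule.subset_span (Set.mem_insert_of_mem _ ⟨j, hj, rfl⟩))
      set c := symp x (p ⟨0, hn⟩, q ⟨0, hn⟩) with hc
      have hx2 : x + c • e ∈ L' := L'.add_mem hx (L'.smul_mem c heL')
      have hlin : ∀ y, symp (x + c • e) y = symp x y + c * symp e y := by
        intro y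
        rw [symp_comm, symp_add_right, symp_smul_right, symp_comm y x, symp_comm y e]
      have hperp : ∀ j, symp (x + c • e) (p j, q j) = 0 := by
        intro j
        rw [hlin, he']
        by_cases hj : j = ⟨0, hn⟩
        · subst hj
          rw [hlead, mul_one, ← hc]
          exact haa c
        · rw [hL' x hx _ (hfL' j hj), hcol j hj, mul_zero, add_zero]
      -- x + c • e lies in the original Lagrangian
      have hL2 : IsIsotropic (Submodule.span (ZMod 2)
          (Set.range (fun j => (p j, q j)) ∪ {x + c • e})) := by
        apply isotropic_span
        intro u hu v hv
        simp only [Set.mem_union, Set.mem_range, Set.mem_singleton_iff] at hu hv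
        rcases hu with ⟨i, rfl⟩ | rfl <;> rcases hv with ⟨j, rfl⟩ | rfl
        · exact hLag.1 _ (Submodule.subset_span ⟨i, rfl⟩) _ (Submodule.subset_span ⟨j, rfl⟩)
        · rw [symp_comm]; exact hperp i
        · exact hperp j
        · exact symp_self _
      have hxL : x + c • e ∈ Submodule.span (ZMod 2) (Set.range fun j => (p j, q j)) := by
        have := hLag.2 _ hL2 (Submodule.span_mono Set.subset_union_left)
        rw [← this]
        exact Submodule.subset_span (Or.inr rfl)
      obtain ⟨d, hd⟩ := (Submodule.mem_span_range_iff_exists_fun (ZMod 2)).1 hxL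
      have hd0 : d ⟨0, hn⟩ = 0 := by
        have h1 : symp e (x + c • e) = 0 := by
          rw [symp_add_right, symp_smul_right, symp_self, mul_zero, add_zero]
          exact hL' e heL' x hx
        rw [← hd] at h1
        rw [symp_sum_right] at h1
        rw [Finset.sum_eq_single (⟨0, hn⟩ : Fin n)] at h1
        · rwa [symp_smul_right, he', hlead, mul_one] at h1
        · intro j _ hj
          rw [symp_smul_right, he', hcol j hj, mul_zero]
        · intro h; exact absurd (Finset.mem_univ _) h
      have hxS : x + c • e ∈ Submodule.span (ZMod 2) S := by
        rw [← hd]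
        refine Submodule.sum_mem _ fun j _ => ?_
        by_cases hj : j = ⟨0, hn⟩
        · subst hj; rw [hd0, zero_smul]; exact Submodule.zero_mem _
        · exact Submodule.smul_mem _ _ (Submodule.subset_span ⟨j, hj, rfl⟩)
      have hxeq : x = (x + c • e) + c • e := by
        rw [add_assoc, ← add_smul, haa c, zero_smul, add_zero]
      rw [hxeq]
      exact Submodule.add_mem _
        (Submodule.span_mono (Set.subset_insert e S) hxS)
        (Submodule.smul_mem _ _ (Submodule.subset_span (Set.mem_insert _ _)))
  · -- rank
    have hTk : ∀ v ∈ Submodule.span (ZMod 2) (q '' {j | j ≠ ⟨0, hn⟩}), v k = 0 := by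
      intro v hv
      induction hv using Submodule.span_induction with
      | mem a ha => obtain ⟨j, hj, rfl⟩ := ha; exact hcol j hj
      | zero => rfl
      | add u w _ _ h1 h2 => simp [h1, h2]
      | smul cc u _ h1 => simp [h1]
    have hq0T : q ⟨0, hn⟩ ∉ Submodule.span (ZMod 2) (q '' {j | j ≠ ⟨0, hn⟩}) := by
      intro h
      rw [hTk _ h] at hlead
      exact absurd hlead (by decide)
    have hq0ne : q ⟨0, hn⟩ ≠ 0 := by
      intro h
      rw [h] at hlead
      simp at hlead
    have hr1 : Set.range q = insert (q ⟨0, hn⟩) (q '' {j | j ≠ ⟨0, hn⟩}) := by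
      ext v
      simp only [Set.mem_range, Set.mem_insert_iff, Set.mem_image, Set.mem_setOf_eq]
      constructor
      · rintro ⟨j, rfl⟩
        by_cases hj : j = ⟨0, hn⟩
        · exact Or.inl (by rw [hj])
        · exact Or.inr ⟨j, hj, rfl⟩
      · rintro (rfl | ⟨j, hj, rfl⟩) <;> exact ⟨_, rfl⟩
    have hM' : (Matrix.of fun j i => if j = ⟨0, hn⟩ then (0 : ZMod 2) else q j i) =
        fun j => if j = ⟨0, hn⟩ then (0 : V2 n) else q j := by
      funext j i
      by_cases hj : j = ⟨0, hn⟩ <;> simp [hj, Matrix.of_apply]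
    have hr2 : Set.range (fun j => if j = ⟨0, hn⟩ then (0 : V2 n) else q j)
        = insert (0 : V2 n) (q '' {j | j ≠ ⟨0, hn⟩}) := by
      ext v
      simp only [Set.mem_range, Set.mem_insert_iff, Set.mem_image, Set.mem_setOf_eq]
      constructor
      · rintro ⟨j, rfl⟩
        by_cases hj : j = ⟨0, hn⟩
        · left; simp [hj]
        · right; exact ⟨j, hj, by simp [hj]⟩
      · rintro (rfl | ⟨j, hj, rfl⟩)
        · exact ⟨⟨0, hn⟩, by simp⟩
        · exact ⟨j, by simp [hj]⟩
    have hinf : (Submodule.span (ZMod 2) {q ⟨0, hn⟩} ⊓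
        Submodule.span (ZMod 2) (q '' {j | j ≠ ⟨0, hn⟩})) = ⊥ := by
      rw [Submodule.eq_bot_iff]
      intro v hv
      rw [Submodule.mem_inf, Submodule.mem_span_singleton] at hv
      obtain ⟨⟨a, rfl⟩, hv2⟩ := hv
      rcases (by decide : ∀ a : ZMod 2, a = 0 ∨ a = 1) a with h | h
      · rw [h, zero_smul]
      · rw [h, one_smul] at hv2 ⊢
        exact absurd hv2 hq0T
    have hsum := Submodule.finrank_sup_add_finrank_inf_eq
      (Submodule.span (ZMod 2) {q ⟨0, hn⟩}) (Submodule.span (ZMod 2) (q '' {j | j ≠ ⟨0, hn⟩}))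
    rw [hinf, finrank_bot, add_zero, finrank_span_singleton hq0ne] at hsum
    have hOld : r = 1 + Module.finrank (ZMod 2)
        (Submodule.span (ZMod 2) (q '' {j | j ≠ ⟨0, hn⟩})) := by
      rw [← hrank, Matrix.rank_eq_finrank_span_row, Matrix.row_def,
        show (Matrix.of fun j i => q j i) = q from rfl, hr1, Submodule.span_insert, hsum]
    have hNew : (Matrix.of fun j i => if j = ⟨0, hn⟩ then (0 : ZMod 2) else q j i).rank
        = Module.finrank (ZMod 2) (Submodule.span (ZMod 2) (q '' {j | j ≠ ⟨0, hn⟩})) := by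
      rw [Matrix.rank_eq_finrank_span_row, Matrix.row_def, hM', hr2, Submodule.span_insert_zero]
    rw [hNew]
    omega
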